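/- For every integer n ≥ 1 and every real number r ≥ 1, the sum ∑_{i=1}^n i^r is at least (r/(r+1)) · n^r (n+1)^r / ((n+1)^r − n^r). -/

import Mathlib

open Real Finset

lemma aux_sinh {t : ℝ} (ht : 0 ≤ t) : 2 * t ≤ Real.exp t - Real.exp (-t) := by
  have h := Real.self_le_sinh_iff.mpr ht
  rw [Real.sinh_eq] at h
  linarith

lemma aux_log {x : ℝ} (h0 : 0 ≤ x) (h1 : x < 1) :
    2 * x ≤ Real.log (1 + x) - Real.log (1 - x) := by
  set f : ℝ → ℝ := fun y => Real.log (1 + y) - Real.log (1 - y) - 2 * y with hf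
  have key : MonotoneOn f (Set.Ico 0 1) := by
    apply monotoneOn_of_hasDerivWithinAt_nonneg (convex_Ico 0 1)
      (f' := fun y => 1 / (1 + y) - (-1) / (1 - y) - 2)
    · apply ContinuousOn.sub
      apply ContinuousOn.sub
      · apply ContinuousOn.log (by fun_prop)
        intro y hy; simp only [Set.mem_Ico] at hy; intro h; linarith [hy.1]
      · apply ContinuousOn.log (by fun_prop)
        intro y hy; simp only [Set.mem_Ico] at hy; intro h; linarith [hy.2]
      · fun_prop
    · intro y hy
      rw [interior_Ico] at hy
      obtain ⟨hy0, hy1⟩ := hy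
      have h1y : (0:ℝ) < 1 + y := by linarith
      have h2y : (0:ℝ) < 1 - y := by linarith
      apply HasDerivAt.hasDerivWithinAt
      have d1 : HasDerivAt (fun y : ℝ => Real.log (1 + y)) (1 / (1 + y)) y := by
        simpa using (((hasDerivAt_id y).const_add 1).log h1y.ne')
      have d2 : HasDerivAt (fun y : ℝ => Real.log (1 - y)) ((-1) / (1 - y)) y := by
        simpa using (((hasDerivAt_id y).const_sub 1).log h2y.ne')
      have d3 : HasDerivAt (fun y : ℝ => 2 * y) 2 y := by
        simpa using (hasDerivAt_id y).const_mul 2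
      exact (d1.sub d2).sub d3
    · intro y hy
      rw [interior_Ico] at hy
      obtain ⟨hy0, hy1⟩ := hy
      have h1y : (0:ℝ) < 1 + y := by linarith
      have h2y : (0:ℝ) < 1 - y := by linarith
      have e1 : 1 / (1 + y) - (-1) / (1 - y) = 2 / (1 - y ^ 2) := by
        rw [div_sub_div _ _ h1y.ne' h2y.ne', div_eq_div_iff (by positivity) (by nlinarith)]
        ring
      rw [e1]
      have : (2:ℝ) ≤ 2 / (1 - y ^ 2) := by
        rw [le_div_iff₀ (by nlinarith)]
        nlinarith
      linarith
  have h01 : (0:ℝ) ∈ Set.Ico (0:ℝ) 1 := by constructor <;> norm_num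
  have hx : x ∈ Set.Ico (0:ℝ) 1 := ⟨h0, h1⟩
  have := key h01 hx h0
  simp only [hf] at this
  simp at this
  linarith

lemma keyC {s x : ℝ} (hs : 0 ≤ s) (h0 : 0 ≤ x) (h1 : x < 1) :
    2 * x * s * ((1 + x) * (1 - x)) ^ s ≤ (1 + x) ^ s - (1 - x) ^ s := by
  have hp1 : (0:ℝ) < 1 + x := by linarith
  have hp2 : (0:ℝ) < 1 - x := by linarith
  set M := Real.log (1 + x) with hM
  set L := -Real.log (1 - x) with hL
  have hMnn : 0 ≤ M := Real.log_nonneg (by linarith)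
  have hML : M ≤ L := by
    have : Real.log ((1 + x) * (1 - x)) ≤ 0 :=
      Real.log_nonpos (by positivity) (by nlinarith)
    rw [Real.log_mul hp1.ne' hp2.ne'] at this
    simp only [hL]; linarith
  have h2x : 2 * x ≤ M + L := by have := aux_log h0 h1; simp only [hM, hL]; linarith
  have e1 : (1 + x) ^ s = Real.exp (M * s) := by
    rw [Real.rpow_def_of_pos hp1]
  have e2 : (1 - x) ^ s = Real.exp (-L * s) := by
    rw [Real.rpow_def_of_pos hp2]; simp [hL]
  have e3 : ((1 + x) * (1 - x)) ^ s = Real.exp ((M - L) * s) := by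
    rw [Real.rpow_def_of_pos (by positivity), Real.log_mul hp1.ne' hp2.ne']
    congr 1; simp only [hM, hL]; ring
  rw [e1, e2, e3]
  set t := s * (M + L) / 2 with ht
  have htnn : 0 ≤ t := by nlinarith
  have factored : Real.exp (M * s) - Real.exp (-L * s)
      = (Real.exp t - Real.exp (-t)) * Real.exp ((M - L) * s / 2) := by
    rw [sub_mul, ← Real.exp_add, ← Real.exp_add]
    congr 2 <;> · simp only [ht]; ring
  rw [factored]
  have step1 : 2 * x * s * Real.exp ((M - L) * s) ≤ s * (M + L) * Real.exp ((M - L) * s) := by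
    apply mul_le_mul_of_nonneg_right _ (Real.exp_pos _).le
    nlinarith
  have step2 : s * (M + L) * Real.exp ((M - L) * s) ≤ s * (M + L) * Real.exp ((M - L) * s / 2) := by
    apply mul_le_mul_of_nonneg_left _ (by nlinarith)
    apply Real.exp_le_exp.2
    nlinarith
  have step3 : s * (M + L) * Real.exp ((M - L) * s / 2)
      ≤ (Real.exp t - Real.exp (-t)) * Real.exp ((M - L) * s / 2) := by
    apply mul_le_mul_of_nonneg_right _ (Real.exp_pos _).le
    have := aux_sinh htnn
    simp only [ht] at this ⊢
    linarith
  exact le_trans (le_trans step1 step2) step3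

lemma keyF {r x : ℝ} (hr : 1 ≤ r) (h0 : 0 ≤ x) (h1 : x < 1) :
    r + 1 ≤ (1 + x) ^ r + (1 - x) ^ r + (r - 1) * ((1 + x) * (1 - x)) ^ r := by
  set F : ℝ → ℝ := fun y => (1 + y) ^ r + (1 - y) ^ r + (r - 1) * ((1 + y) * (1 - y)) ^ r with hF
  have key : MonotoneOn F (Set.Ico 0 1) := by
    apply monotoneOn_of_hasDerivWithinAt_nonneg (convex_Ico 0 1)
      (f' := fun y => 1 * r * (1 + y) ^ (r - 1) + (-1) * r * (1 - y) ^ (r - 1)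
        + (r - 1) * ((1 * (1 - y) + (1 + y) * (-1)) * r * ((1 + y) * (1 - y)) ^ (r - 1)))
    · apply ContinuousOn.add
      apply ContinuousOn.add
      · apply ContinuousOn.rpow_const (by fun_prop)
        intro y hy; exact Or.inr (by linarith)
      · apply ContinuousOn.rpow_const (by fun_prop)
        intro y hy; exact Or.inr (by linarith)
      · apply ContinuousOn.mul continuousOn_const
        apply ContinuousOn.rpow_const (by fun_prop)
        intro y hy; exact Or.inr (by linarith)
    · intro y hy
      rw [interior_Ico] at hy
      obtain ⟨hy0, hy1⟩ := hy
      have h1y : (0:ℝ) < 1 + y := by linarith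
      have h2y : (0:ℝ) < 1 - y := by linarith
      apply HasDerivAt.hasDerivWithinAt
      have d1 : HasDerivAt (fun y : ℝ => (1 + y) ^ r) (1 * r * (1 + y) ^ (r - 1)) y :=
        ((hasDerivAt_id y).const_add 1).rpow_const (Or.inl h1y.ne')
      have d2 : HasDerivAt (fun y : ℝ => (1 - y) ^ r) ((-1) * r * (1 - y) ^ (r - 1)) y := by
        have := ((hasDerivAt_id y).const_sub 1).rpow_const (p := r) (Or.inl h2y.ne')
        simpa using this
      have d3 : HasDerivAt (fun y : ℝ => (1 + y) * (1 - y))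
          (1 * (1 - y) + (1 + y) * (-1)) y := by
        have a1 : HasDerivAt (fun y : ℝ => 1 + y) 1 y := (hasDerivAt_id y).const_add 1
        have a2 : HasDerivAt (fun y : ℝ => 1 - y) (-1) y := by
          simpa using (hasDerivAt_id y).const_sub 1
        exact a1.mul a2
      have d4 := (d3.rpow_const (p := r) (Or.inl (by positivity))).const_mul (r - 1)
      exact (d1.add d2).add d4
    · intro y hy
      rw [interior_Ico] at hy
      obtain ⟨hy0, hy1⟩ := hy
      have hC := keyC (s := r - 1) (x := y) (by linarith) hy0.le hy1
      have hrpos : (0:ℝ) < r := by linarith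
      nlinarith [hC]
  have h01 : (0:ℝ) ∈ Set.Ico (0:ℝ) 1 := by constructor <;> norm_num
  have hx : x ∈ Set.Ico (0:ℝ) 1 := ⟨h0, h1⟩
  have hm := key h01 hx h0
  simp only [hF] at hm
  norm_num [Real.one_rpow] at hm
  linarith

-- per-step inequality for i ≥ 2, with a = (i-1)^r, b = i^r, c = (i+1)^r
lemma step {r : ℝ} (hr : 1 ≤ r) {i : ℕ} (hi : 2 ≤ i) :
    r * ((i:ℝ) ^ r * ((i:ℝ) + 1) ^ r + ((i:ℝ) - 1) ^ r * (i:ℝ) ^ r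
        - 2 * ((i:ℝ) - 1) ^ r * ((i:ℝ) + 1) ^ r)
      ≤ (r + 1) * ((((i:ℝ) + 1) ^ r - (i:ℝ) ^ r) * ((i:ℝ) ^ r - ((i:ℝ) - 1) ^ r)) := by
  have hi2 : (2:ℝ) ≤ (i:ℝ) := by exact_mod_cast hi
  have hipos : (0:ℝ) < i := by linarith
  set x : ℝ := 1 / (i:ℝ) with hx
  have hx0 : 0 ≤ x := by positivity
  have hx1 : x < 1 := by rw [hx, div_lt_one hipos]; linarith
  have h := keyF hr hx0 hx1
  have e1 : 1 + x = ((i:ℝ) + 1) / (i:ℝ) := by rw [hx]; field_simp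
  have e2 : 1 - x = ((i:ℝ) - 1) / (i:ℝ) := by rw [hx]; field_simp
  have hn1 : (0:ℝ) ≤ (i:ℝ) + 1 := by linarith
  have hn2 : (0:ℝ) ≤ (i:ℝ) - 1 := by linarith
  rw [e1, e2, Real.div_rpow hn1 hipos.le, Real.div_rpow hn2 hipos.le,
    Real.mul_rpow (by positivity) (by positivity),
    Real.div_rpow hn1 hipos.le, Real.div_rpow hn2 hipos.le] at h
  have hb : (0:ℝ) < (i:ℝ) ^ r := Real.rpow_pos_of_pos hipos r
  set a : ℝ := ((i:ℝ) - 1) ^ r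
  set b : ℝ := (i:ℝ) ^ r
  set c : ℝ := ((i:ℝ) + 1) ^ r
  have h2 : (r + 1) * b ^ 2 ≤ c * b + a * b + (r - 1) * (a * c) := by
    have := mul_le_mul_of_nonneg_right h (le_of_lt (by positivity : (0:ℝ) < b ^ 2))
    calc (r + 1) * b ^ 2 ≤ (c / b + a / b + (r - 1) * (c / b * (a / b))) * b ^ 2 := this
      _ = c * b + a * b + (r - 1) * (a * c) := by field_simp
  nlinarith [h2]

noncomputable def gfun (r : ℝ) (k : ℕ) : ℝ :=
  r / (r + 1) * ((k:ℝ) ^ r * ((k:ℝ) + 1) ^ r / (((k:ℝ) + 1) ^ r - (k:ℝ) ^ r))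

lemma gfun_zero {r : ℝ} (hr : 1 ≤ r) : gfun r 0 = 0 := by
  have : (0:ℝ) ^ r = 0 := Real.zero_rpow (by linarith)
  simp [gfun, this]

lemma gfun_one {r : ℝ} (hr : 1 ≤ r) : gfun r 1 ≤ 1 := by
  have hd : r + 1 ≤ (2:ℝ) ^ r := by
    have := one_add_mul_self_le_rpow_one_add (by norm_num : (-1:ℝ) ≤ 1) hr
    norm_num at this
    linarith
  have hd1 : (0:ℝ) < (2:ℝ) ^ r - 1 := by linarith
  rw [gfun]
  push_cast
  rw [Real.one_rpow, one_mul]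
  have e : (1:ℝ) + 1 = 2 := by norm_num
  rw [e, div_mul_div_comm, div_le_one (by positivity)]
  nlinarith

lemma gfun_step {r : ℝ} (hr : 1 ≤ r) (j : ℕ) (hj : 1 ≤ j) :
    gfun r (j + 1) ≤ gfun r j + ((j:ℝ) + 1) ^ r := by
  have hj1 : (1:ℝ) ≤ (j:ℝ) := by exact_mod_cast hj
  have hrpos : (0:ℝ) < r := by linarith
  set a : ℝ := (j:ℝ) ^ r with ha
  set b : ℝ := ((j:ℝ) + 1) ^ r with hb
  set c : ℝ := ((j:ℝ) + 2) ^ r with hc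
  have hapos : 0 < a := Real.rpow_pos_of_pos (by linarith) r
  have hbpos : 0 < b := Real.rpow_pos_of_pos (by linarith) r
  have hab : a < b := Real.rpow_lt_rpow (by linarith) (by linarith) hrpos
  have hbc : b < c := Real.rpow_lt_rpow (by positivity) (by linarith) hrpos
  have hstep := step hr (i := j + 1) (by omega)
  have hcast : ((j + 1 : ℕ) : ℝ) = (j:ℝ) + 1 := by push_cast; ring
  rw [hcast] at hstep
  have e1 : (j:ℝ) + 1 + 1 = (j:ℝ) + 2 := by ring
  have e2 : (j:ℝ) + 1 - 1 = (j:ℝ) := by ring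
  rw [e1, e2, ← ha, ← hb, ← hc] at hstep
  have eg1 : gfun r (j + 1) = r / (r + 1) * (b * c / (c - b)) := by
    rw [gfun, hcast, e1, ← hb, ← hc]
  have eg2 : gfun r j = r / (r + 1) * (a * b / (b - a)) := by
    rw [gfun, ← ha, ← hb]
  rw [eg1, eg2, ← sub_le_iff_le_add']
  have ediff : r / (r + 1) * (b * c / (c - b)) - r / (r + 1) * (a * b / (b - a))
      = r * (b * c * (b - a) - a * b * (c - b)) / ((r + 1) * ((c - b) * (b - a))) := by
    have h1 : (r:ℝ) + 1 ≠ 0 := by positivity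
    have h2 : c - b ≠ 0 := by linarith
    have h3 : b - a ≠ 0 := by linarith
    field_simp
  have hpos : (0:ℝ) < (r + 1) * ((c - b) * (b - a)) := by
    apply mul_pos (by linarith)
    exact mul_pos (by linarith) (by linarith)
  rw [ediff, div_le_iff₀ hpos]
  nlinarith [mul_le_mul_of_nonneg_left hstep hbpos.le]

lemma gfun_main {r : ℝ} (hr : 1 ≤ r) : ∀ n : ℕ, 1 ≤ n →
    gfun r n ≤ ∑ i ∈ Finset.Icc 1 n, (i : ℝ) ^ r := by
  intro n hn
  induction n, hn using Nat.le_induction with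
  | base => simpa [Real.one_rpow] using gfun_one hr
  | succ n hn ih =>
    rw [Finset.sum_Icc_succ_top (by omega : 1 ≤ n + 1)]
    have := gfun_step hr n hn
    have hcast : ((n + 1 : ℕ) : ℝ) = (n:ℝ) + 1 := by push_cast; ring
    rw [hcast]
    linarith

theorem levin_steckin_high (n : ℕ) (hn : 1 ≤ n) (r : ℝ) (hr : 1 ≤ r) :
    ∑ i ∈ Finset.Icc 1 n, (i : ℝ) ^ r ≥
      (r / (r + 1)) * ((n : ℝ) ^ r * (n + 1 : ℝ) ^ r / ((n + 1 : ℝ) ^ r - (n : ℝ) ^ r)) := by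
  exact gfun_main hr n hn
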